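/- Let p, q be positive integers with q < p, r = p/q, and c ∈ ℂ∖{0}. The sum of the q-th powers of the inverses of the p roots of R(ζ) = c·ζ^p − r·ζ^q + (r−1) equals p/(r−1). -/

import Mathlib

open Polynomial Multiset

/-- Newton's identity for multisets: if the elementary symmetric functions of degrees
`1, ..., k-1` of a multiset vanish, the `k`-th power sum is `(-1)^(k+1) * k * esymm k`. -/
lemma multiset_psum_eq (s : Multiset ℂ) (k : ℕ) (hk : 0 < k)
    (h : ∀ j, 0 < j → j < k → s.esymm j = 0) :
    (s.map (· ^ k)).sum = (-1) ^ (k + 1) * k * s.esymm k := by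
  induction s using Quotient.inductionOn with
  | h l =>
    set f : Fin l.length → ℂ := l.get with hf
    have hs : (Finset.univ.val.map f) = (l : Multiset ℂ) := by
      rw [Fin.univ_val_map]
      exact congrArg _ (List.ofFn_get l)
    have he : ∀ j, MvPolynomial.aeval f (MvPolynomial.esymm (Fin l.length) ℂ j)
        = (l : Multiset ℂ).esymm j := by
      intro j
      rw [MvPolynomial.aeval_esymm_eq_multiset_esymm, hs]
    have hp : ∀ m, MvPolynomial.aeval f (MvPolynomial.psum (Fin l.length) ℂ m)
        = ((l : Multiset ℂ).map (· ^ m)).sum := by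
      intro m
      rw [MvPolynomial.psum, map_sum]
      simp only [map_pow, MvPolynomial.aeval_X]
      rw [Finset.sum, ← hs, Multiset.map_map]
      rfl
    have key := congrArg (MvPolynomial.aeval f)
      (MvPolynomial.psum_eq_mul_esymm_sub_sum (Fin l.length) ℂ k hk)
    simp only [map_sub, map_mul, map_pow, map_neg, map_one, map_natCast, map_sum] at key
    rw [hp, he] at key
    have hz : ∀ a ∈ Finset.filter (fun a : ℕ × ℕ => a.1 ∈ Set.Ioo 0 k)
        (Finset.HasAntidiagonal.antidiagonal k),
        (-1 : ℂ) ^ a.1 * MvPolynomial.aeval f (MvPolynomial.esymm (Fin l.length) ℂ a.1) *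
          MvPolynomial.aeval f (MvPolynomial.psum (Fin l.length) ℂ a.2) = 0 := by
      intro a ha
      rw [Finset.mem_filter] at ha
      rw [he]
      rw [show ((l : Multiset ℂ).esymm a.1 = 0) from h a.1 ha.2.1 ha.2.2]
      ring
    rw [Finset.sum_congr rfl hz, Finset.sum_const, smul_zero, sub_zero] at key
    exact key

/-- For `q < p`, `r = p/q`, `c ≠ 0`, the sum of the `q`-th powers of the
inverses of the `p` roots of `R(ζ) = c·ζ^p − r·ζ^q + (r−1)` equals `p/(r−1)`. -/
theorem sum_of_qth_powers_of_inverse_roots (p q : ℕ) (hq : 0 < q) (hpq : q < p)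
    (c : ℂ) (hc : c ≠ 0) :
    (((C c * X ^ p - C ((p : ℂ) / q) * X ^ q + C ((p : ℂ) / q - 1)).roots).map
        (fun ζ => (ζ⁻¹) ^ q)).sum = (p : ℂ) / ((p : ℂ) / q - 1) := by
  set r : ℂ := (p : ℂ) / q with hr
  set R : ℂ[X] := C c * X ^ p - C r * X ^ q + C (r - 1) with hR
  have hq0 : (q : ℂ) ≠ 0 := Nat.cast_ne_zero.2 hq.ne'
  have hpqC : (p : ℂ) ≠ (q : ℂ) := by exact_mod_cast hpq.ne'
  have hr1 : r - 1 ≠ 0 := by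
    rw [hr, div_sub_one hq0]
    exact div_ne_zero (sub_ne_zero.2 hpqC) hq0
  have hdeg : R.natDegree = p := by
    rw [hR]
    compute_degree!
    · rw [if_neg (by omega : ¬ p = q), if_neg (by omega : ¬ p = 0)]
      simpa using hc
    · omega
    · omega
  have hco : ∀ j, R.coeff j = (if j = p then c else 0) - (if j = q then r else 0)
      + (if j = 0 then r - 1 else 0) := by
    intro j
    simp only [hR, coeff_add, coeff_sub, coeff_C_mul, coeff_X_pow, coeff_C,
      mul_ite, mul_one, mul_zero]
  have hlead : R.leadingCoeff = c := by
    rw [Polynomial.leadingCoeff, hdeg, hco]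
    rw [if_pos rfl, if_neg (by omega : ¬ p = q), if_neg (by omega : ¬ p = 0)]
    ring
  have hR0 : R ≠ 0 := fun h => hc (by rw [← hlead, h, leadingCoeff_zero])
  have hcard : Multiset.card R.roots = p := by
    rw [← hdeg]
    exact splits_iff_card_roots.mp (IsAlgClosed.splits R)
  have hesym : ∀ j ≤ p, c * ((-1) ^ j * R.roots.esymm j) = R.coeff (p - j) := by
    intro j hj
    have h2 := Polynomial.coeff_eq_esymm_roots_of_card
      (p := R) (hcard.trans hdeg.symm) (k := p - j) (hdeg ▸ Nat.sub_le p j)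
    rw [hdeg, Nat.sub_sub_self hj, hlead] at h2
    rw [h2]; ring
  have hzero : ∀ j, 0 < j → j < p - q → R.roots.esymm j = 0 := by
    intro j hj0 hjk
    have hjp : j ≤ p := le_of_lt (lt_of_lt_of_le hjk (Nat.sub_le p q))
    have h2 := hesym j hjp
    rw [hco] at h2
    rw [if_neg (by omega : ¬ p - j = p), if_neg (by omega : ¬ p - j = q),
      if_neg (by omega : ¬ p - j = 0)] at h2
    simp only [sub_zero, add_zero, zero_sub] at h2
    rcases mul_eq_zero.mp h2 with h | h
    · exact absurd h hc
    · rcases mul_eq_zero.mp h with h' | h'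
      · exact absurd h' (pow_ne_zero _ (by norm_num))
      · exact h'
  have eK : c * ((-1) ^ (p - q) * R.roots.esymm (p - q)) = -r := by
    have h2 := hesym (p - q) (Nat.sub_le p q)
    rw [Nat.sub_sub_self hpq.le, hco] at h2
    rw [if_neg (by omega : ¬ q = p), if_pos rfl, if_neg hq.ne'] at h2
    rw [h2]; ring
  have hnewton := multiset_psum_eq R.roots (p - q) (by omega) hzero
  have h1 : ((-1 : ℂ)) ^ (p - q) * (-1) ^ (p - q) = 1 := by
    rw [← pow_add]
    exact Even.neg_one_pow ⟨p - q, rfl⟩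
  have ce : c * R.roots.esymm (p - q) = (-1 : ℂ) ^ (p - q) * (-r) := by
    linear_combination ((-1 : ℂ)) ^ (p - q) * eK - c * R.roots.esymm (p - q) * h1
  have hcS : c * (R.roots.map (fun ζ => ζ ^ (p - q))).sum = ((p : ℂ) - q) * r := by
    have hkC : ((p - q : ℕ) : ℂ) = (p : ℂ) - q := Nat.cast_sub hpq.le
    rw [show (R.roots.map (fun ζ => ζ ^ (p - q))).sum
      = (R.roots.map (· ^ (p - q))).sum from rfl, hnewton, ← hkC]
    linear_combination ((-1 : ℂ)) ^ ((p - q) + 1) * ((p - q : ℕ) : ℂ) * ce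
      + ((p - q : ℕ) : ℂ) * r * h1
  have hmap : R.roots.map (fun ζ => (ζ⁻¹) ^ q)
      = R.roots.map (fun ζ => r / (r - 1) - (c / (r - 1)) * ζ ^ (p - q)) := by
    refine Multiset.map_congr rfl (fun ζ hζ => ?_)
    have heval : c * ζ ^ p - r * ζ ^ q + (r - 1) = 0 := by
      have h3 := Polynomial.isRoot_of_mem_roots hζ
      simpa [hR, Polynomial.IsRoot, eval_add, eval_sub, eval_mul, eval_pow] using h3
    have hζ0 : ζ ≠ 0 := by
      intro h0
      subst h0
      rw [zero_pow (by omega : p ≠ 0), zero_pow hq.ne'] at heval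
      exact hr1 (by linear_combination heval)
    have hpow : ζ ^ (p - q) * ζ ^ q = ζ ^ p := by
      rw [← pow_add, Nat.sub_add_cancel hpq.le]
    have hqz : ζ ^ q ≠ 0 := pow_ne_zero q hζ0
    rw [inv_pow]
    field_simp
    linear_combination heval + c * hpow
  have hsubl : ∀ (s : Multiset ℂ) (f g : ℂ → ℂ),
      (s.map (fun x => f x - g x)).sum = (s.map f).sum - (s.map g).sum := by
    intro s f g
    induction s using Multiset.induction with
    | empty => simp
    | cons a s ih => simp only [Multiset.map_cons, Multiset.sum_cons, ih]; ring
  rw [hmap, hsubl R.roots (fun _ => r / (r - 1)) (fun ζ => (c / (r - 1)) * ζ ^ (p - q)),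
    Multiset.sum_map_mul_left, Multiset.map_const', Multiset.sum_replicate, hcard]
  have h4 : c / (r - 1) * (R.roots.map (fun ζ => ζ ^ (p - q))).sum
      = ((p : ℂ) - q) * r / (r - 1) := by
    rw [div_mul_eq_mul_div, hcS]
  rw [h4, nsmul_eq_mul, hr]
  field_simp
  ring
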